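/- Let h : R → R be differentiable with h² = f(g − α) where f, g are strictly increasing differentiable functions, f(x₀) = 0 and α = g(x₀), and h ≥ 0. Then (h')² ≥ f' g' pointwise wherever h > 0. -/

import Mathlib

theorem stmt10 (f g h : ℝ → ℝ) (x₀ : ℝ)
    (hf : StrictMono f) (hg : StrictMono g)
    (hfd : Differentiable ℝ f) (hgd : Differentiable ℝ g) (hhd : Differentiable ℝ h)
    (hfx₀ : f x₀ = 0)
    (hpos : ∀ x, 0 ≤ h x)
    (hsq : ∀ x, (h x) ^ 2 = f x * (g x - g x₀)) :
    ∀ x, 0 < h x → deriv f x * deriv g x ≤ (deriv h x) ^ 2 := by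
  intro x hx
  have h1 : HasDerivAt (fun y => (h y) ^ 2) (2 * h x ^ 1 * deriv h x) x :=
    (hhd x).hasDerivAt.pow 2
  have h2 : HasDerivAt (fun y => f y * (g y - g x₀))
      (deriv f x * (g x - g x₀) + f x * deriv g x) x := by
    exact (hfd x).hasDerivAt.mul ((hgd x).hasDerivAt.sub_const (g x₀))
  have heq : (fun y => (h y) ^ 2) = fun y => f y * (g y - g x₀) := funext hsq
  rw [heq] at h1
  have key : 2 * h x ^ 1 * deriv h x = deriv f x * (g x - g x₀) + f x * deriv g x :=
    h1.unique h2
  have hsqx := hsq x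
  simp only [pow_one] at key
  have hkey2 : (2 * h x * deriv h x) ^ 2 = (deriv f x * (g x - g x₀) + f x * deriv g x) ^ 2 := by
    rw [key]
  have huv : deriv f x * (g x - g x₀) * (f x * deriv g x)
      = deriv f x * deriv g x * h x ^ 2 := by rw [hsqx]; ring
  nlinarith [hkey2, huv, sq_nonneg (deriv f x * (g x - g x₀) - f x * deriv g x),
    mul_pos hx hx]
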